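/- Suppose F satisfies (F1)–(F3), the estimators satisfy (A1)–(A2), and λ ∈ (0, 1/C₅) with C₅ := C₃ C₁ and C₃ := 1 + β/ν. Let N ≥ 1, let u_{N−1} ∈ X_{N−1} satisfy ‖u* − u_{N−1}‖_X ≤ C₆ η_{N−1}(u_{N−1}) with C₆ := λ C₃ + C₂(1 + λ C₅) and η_{N−1}(u_{N−1}) > 0, and let (u_N^n)_{n≥0} ⊂ X_N be the iterative linearization sequence on X_N with initial guess u_N^0 = u_{N−1}, satisfying (F4) on X_N with constant C_H > 0. Set C₄ := L C₃²/(2 C_H), C := L^{1/2} C₄^{1/2} C₆ / (√2 C_H^{1/2}), and C′ := C C₁ C₄^{1/2} / (1 − (1 + C₄⁻¹)^{−1/2}). If k ≥ 1 is the minimal index with ‖u_N^k − u_N^{k−1}‖_X ≤ λ η_N(u_N^k) and η_N(u_N^k) > 0, then k ≤ (2 / log(1 + C₄⁻¹)) · log( (C λ⁻¹ + C′)(1 + C₄⁻¹) · max{1, η_{N−1}(u_{N−1}) / η_N(u_N^k)} ) + 1. -/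

import Mathlib

set_option autoImplicit false
set_option maxHeartbeats 1000000


private lemma aux_deriv_le (g g' : ℝ → ℝ)
    (hg : ∀ t, HasDerivAt g (g' t) t)
    (hpos : ∀ t ∈ Set.Ioo (0:ℝ) 1, 0 ≤ g' t) : g 0 ≤ g 1 := by
  have hmono : MonotoneOn g (Set.Icc (0:ℝ) 1) := by
    apply monotoneOn_of_deriv_nonneg (convex_Icc 0 1)
    · exact fun t _ => ((hg t).continuousAt).continuousWithinAt
    · exact fun t _ => ((hg t).differentiableAt).differentiableWithinAt
    · intro t ht
      rw [interior_Icc] at ht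
      rw [(hg t).deriv]
      exact hpos t ht
  exact hmono (Set.mem_Icc.mpr ⟨le_refl 0, zero_le_one⟩)
    (Set.mem_Icc.mpr ⟨zero_le_one, le_refl 1⟩) zero_le_one

/-- Bound on the number of linearization steps on the space `X_N` (here `Z`, with
previous space `X_{N−1}` here `Y`): if `k ≥ 1` is the minimal index with
`‖u_N^k − u_N^{k−1}‖ ≤ λ η_N(u_N^k)` and `η_N(u_N^k) > 0`, then
`k ≤ (2/log(1+C₄⁻¹)) log((Cλ⁻¹+C')(1+C₄⁻¹) max{1, η_{N−1}(u_{N−1})/η_N(u_N^k)}) + 1`. -/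
theorem stmt_19
    {X : Type*} [NormedAddCommGroup X] [InnerProductSpace ℝ X] [CompleteSpace X]
    (F : X → X →L[ℝ] ℝ) (L ν : ℝ) (hL : 0 < L) (hν : 0 < ν)
    (hF1 : ∀ u v w : X, |F u w - F v w| ≤ L * ‖u - v‖ * ‖w‖)
    (hF2 : ∀ u v : X, ν * ‖u - v‖ ^ 2 ≤ F u (u - v) - F v (u - v))
    (ustar : X) (hustar : ∀ v : X, F ustar v = 0)
    (a : X → X →ₗ[ℝ] X →ₗ[ℝ] ℝ) (α β : ℝ) (hα : 0 < α) (hβ : 0 < β)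
    (hcoer : ∀ u v : X, α * ‖v‖ ^ 2 ≤ a u v v)
    (hbdd : ∀ u v w : X, a u v w ≤ β * ‖v‖ * ‖w‖)
    (H : X → ℝ)
    (hF3 : ∀ v w : X, ∀ t : ℝ, HasDerivAt (fun s : ℝ => H (v + s • w)) (F (v + t • w) w) t)
    -- nested closed subspaces `Y = X_{N−1} ⊆ Z = X_N`
    (Y Z : Submodule ℝ X) (hYZ : Y ≤ Z)
    (hYclosed : IsClosed (Y : Set X)) (hZclosed : IsClosed (Z : Set X))
    -- discrete solutions and estimators satisfying (A1)–(A2) on `Y` and `Z`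
    (ustarY : X) (hustarY_mem : ustarY ∈ Y) (hustarY : ∀ v ∈ Y, F ustarY v = 0)
    (ustarZ : X) (hustarZ_mem : ustarZ ∈ Z) (hustarZ : ∀ v ∈ Z, F ustarZ v = 0)
    (ηY ηZ : X → ℝ) (C₁ C₂ : ℝ) (hC₁ : 1 ≤ C₁) (hC₂ : 1 ≤ C₂)
    (hηYnonneg : ∀ v ∈ Y, 0 ≤ ηY v) (hηZnonneg : ∀ v ∈ Z, 0 ≤ ηZ v)
    (hA1Y : ∀ v ∈ Y, ∀ w ∈ Y, |ηY v - ηY w| ≤ C₁ * ‖v - w‖)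
    (hA1Z : ∀ v ∈ Z, ∀ w ∈ Z, |ηZ v - ηZ w| ≤ C₁ * ‖v - w‖)
    (hA2Y : ‖ustar - ustarY‖ ≤ C₂ * ηY ustarY)
    (hA2Z : ‖ustar - ustarZ‖ ≤ C₂ * ηZ ustarZ)
    -- the constants
    (lam : ℝ) (hlam : 0 < lam)
    (C₃ C₅ C₆ : ℝ) (hC₃ : C₃ = 1 + β / ν) (hC₅ : C₅ = C₃ * C₁)
    (hlam' : lam < 1 / C₅)
    (hC₆ : C₆ = lam * C₃ + C₂ * (1 + lam * C₅))
    (CH : ℝ) (hCH : 0 < CH)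
    (C₄ C C' : ℝ) (hC₄ : C₄ = L * C₃ ^ 2 / (2 * CH))
    (hC : C = Real.sqrt L * Real.sqrt C₄ * C₆ / (Real.sqrt 2 * Real.sqrt CH))
    (hC' : C' = C * C₁ * Real.sqrt C₄ / (1 - (Real.sqrt (1 + C₄⁻¹))⁻¹))
    -- the previous approximation `u_{N−1}` and the iterates on `Z = X_N`
    (uprev : X) (huprev_mem : uprev ∈ Y)
    (huprev : ‖ustar - uprev‖ ≤ C₆ * ηY uprev) (hηYpos : 0 < ηY uprev)
    (u : ℕ → X) (hu0 : u 0 = uprev) (humem : ∀ n : ℕ, u n ∈ Z)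
    (hiter : ∀ n : ℕ, ∀ w ∈ Z, a (u n) (u (n + 1)) w = a (u n) (u n) w - F (u n) w)
    (hF4 : ∀ n : ℕ, 1 ≤ n → CH * ‖u n - u (n - 1)‖ ^ 2 ≤ H (u (n - 1)) - H (u n))
    -- `k` is the minimal stopping index
    (k : ℕ) (hk : 1 ≤ k)
    (hkstop : ‖u k - u (k - 1)‖ ≤ lam * ηZ (u k))
    (hkmin : ∀ m : ℕ, 1 ≤ m → m < k → ¬ ‖u m - u (m - 1)‖ ≤ lam * ηZ (u m))
    (hηZpos : 0 < ηZ (u k)) :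
    (k : ℝ) ≤ 2 / Real.log (1 + C₄⁻¹) *
        Real.log ((C * lam⁻¹ + C') * (1 + C₄⁻¹) * max 1 (ηY uprev / ηZ (u k))) + 1 := by
  -- ## Basic positivity facts
  have hC₃pos : 0 < C₃ := by rw [hC₃]; positivity
  have hC₃1 : 1 ≤ C₃ := by rw [hC₃]; linarith only [div_pos hβ hν]
  have hC₄pos : 0 < C₄ := by rw [hC₄]; positivity
  have hC₄ne : C₄ ≠ 0 := ne_of_gt hC₄pos
  have hC₅pos : 0 < C₅ := by
    rw [hC₅]; exact mul_pos hC₃pos (lt_of_lt_of_le zero_lt_one hC₁)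
  have hC₂pos : (0:ℝ) < C₂ := lt_of_lt_of_le zero_lt_one hC₂
  have hC₁pos : (0:ℝ) < C₁ := lt_of_lt_of_le zero_lt_one hC₁
  have hC₂term : 0 < C₂ * (1 + lam * C₅) :=
    mul_pos hC₂pos (by linarith only [mul_pos hlam hC₅pos])
  have hC₆pos : 0 < C₆ := by
    rw [hC₆]
    linarith only [mul_pos hlam hC₃pos, hC₂term]
  -- ## the square root `s` of `C₄`
  set s : ℝ := Real.sqrt L * C₃ / (Real.sqrt 2 * Real.sqrt CH) with hs_def
  clear_value s
  have hsqL : Real.sqrt L > 0 := Real.sqrt_pos.mpr hL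
  have hsq2 : Real.sqrt 2 > 0 := Real.sqrt_pos.mpr (by norm_num)
  have hsqCH : Real.sqrt CH > 0 := Real.sqrt_pos.mpr hCH
  have hspos : 0 < s := by
    rw [hs_def]; positivity
  have hs2 : s ^ 2 = C₄ := by
    rw [hs_def, hC₄, div_pow, mul_pow, mul_pow, Real.sq_sqrt hL.le, Real.sq_sqrt hCH.le,
      Real.sq_sqrt (by norm_num : (0:ℝ) ≤ 2)]
  have hsC₄ : Real.sqrt C₄ = s := by rw [← hs2, Real.sqrt_sq hspos.le]
  have hCeq : C = s ^ 2 * C₆ / C₃ := by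
    rw [hC, hsC₄, hs_def]
    field_simp
  have hCpos : 0 < C := by
    rw [hCeq]; exact div_pos (mul_pos (pow_pos hspos 2) hC₆pos) hC₃pos
  -- ## the contraction factor `q` and its square root `θ`
  set q : ℝ := C₄ / (1 + C₄) with hq_def
  clear_value q
  have h1C₄ : 0 < 1 + C₄ := by linarith only [hC₄pos]
  have hqpos : 0 < q := by rw [hq_def]; exact div_pos hC₄pos h1C₄
  have hqlt1 : q < 1 := by
    rw [hq_def]; exact (div_lt_one h1C₄).mpr (by linarith only [hC₄pos])
  set θ : ℝ := Real.sqrt q with hθ_def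
  clear_value θ
  have hθpos : 0 < θ := by rw [hθ_def]; exact Real.sqrt_pos.mpr hqpos
  have hθ2 : θ ^ 2 = q := by rw [hθ_def]; exact Real.sq_sqrt hqpos.le
  have hθlt1 : θ < 1 := by
    have h := Real.sqrt_lt_sqrt hqpos.le hqlt1
    rw [Real.sqrt_one] at h
    rw [hθ_def]
    exact h
  have h1θ : 0 < 1 - θ := by linarith only [hθlt1]
  have hθs : θ ≤ s := by
    rw [hθ_def, ← hsC₄]
    apply Real.sqrt_le_sqrt
    rw [hq_def, div_le_iff₀ h1C₄]
    exact le_mul_of_one_le_right hC₄pos.le (by linarith only [hC₄pos])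
  have hQq : 1 + C₄⁻¹ = q⁻¹ := by
    rw [hq_def, inv_div]
    field_simp
    ring
  have hθQ : (Real.sqrt (1 + C₄⁻¹))⁻¹ = θ := by
    rw [hQq, Real.sqrt_inv, inv_inv, hθ_def]
  have hC'eq : C' = C * C₁ * s / (1 - θ) := by rw [hC', hθQ, hsC₄]
  have hC'pos : 0 < C' := by
    rw [hC'eq]
    exact div_pos (mul_pos (mul_pos hCpos hC₁pos) hspos) h1θ
  have hC₃ne : C₃ ≠ 0 := ne_of_gt hC₃pos
  have h1θne : (1:ℝ) - θ ≠ 0 := ne_of_gt h1θ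
  -- ## the two energy inequalities from (F3)
  have hHlow : ∀ v w : X, F v w + ν/2 * ‖w‖^2 ≤ H (v + w) - H v := by
    intro v w
    have hg : ∀ t : ℝ, HasDerivAt
        (fun t : ℝ => H (v + t • w) - (t * (F v w) + ν/2*t^2*‖w‖^2))
        ((F (v + t • w)) w - ((F v w) + ν*t*‖w‖^2)) t := by
      intro t
      have h1 := hF3 v w t
      have ha : HasDerivAt (fun t : ℝ => t * (F v w)) (F v w) t := by
        simpa using (hasDerivAt_id t).mul_const (F v w)
      have hb : HasDerivAt (fun t : ℝ => ν/2*t^2*‖w‖^2) (ν*t*‖w‖^2) t := by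
        have hsq : HasDerivAt (fun t : ℝ => t^2) (2*t) t := by
          simpa using hasDerivAt_pow 2 t
        have := (hsq.const_mul (ν/2)).mul_const (‖w‖^2)
        convert this using 1
        · rfl
        · rfl
        · ring
      exact h1.sub (ha.add hb)
    have key := aux_deriv_le _ _ hg ?_
    · simp only [zero_smul, add_zero, one_smul, one_pow, mul_zero, zero_pow, mul_one,
        one_mul, zero_mul, sub_zero, zero_add] at key
      norm_num at key
      linarith only [key]
    · intro t ht
      have h2 := hF2 (v + t • w) v
      have he : v + t • w - v = t • w := by abel
      rw [he] at h2
      have hsm : (F (v + t • w)) (t • w) = t * (F (v + t • w)) w := by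
        simp [smul_eq_mul]
      have hsm2 : (F v) (t • w) = t * (F v) w := by simp [smul_eq_mul]
      rw [hsm, hsm2] at h2
      have hns : ‖t • w‖^2 = t^2 * ‖w‖^2 := by
        rw [norm_smul, mul_pow, Real.norm_eq_abs, sq_abs]
      rw [hns] at h2
      have h6 : t * (ν*t*‖w‖^2) ≤ t * ((F (v + t • w)) w - (F v) w) := by
        linarith only [h2]
      have h7 := le_of_mul_le_mul_left h6 ht.1
      linarith only [h7]
  have hHup : ∀ v w : X, H (v + w) - H v ≤ F v w + L/2 * ‖w‖^2 := by
    intro v w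
    have hg : ∀ t : ℝ, HasDerivAt
        (fun t : ℝ => (t * (F v w) + L/2*t^2*‖w‖^2) - H (v + t • w))
        (((F v w) + L*t*‖w‖^2) - (F (v + t • w)) w) t := by
      intro t
      have h1 := hF3 v w t
      have ha : HasDerivAt (fun t : ℝ => t * (F v w)) (F v w) t := by
        simpa using (hasDerivAt_id t).mul_const (F v w)
      have hb : HasDerivAt (fun t : ℝ => L/2*t^2*‖w‖^2) (L*t*‖w‖^2) t := by
        have hsq : HasDerivAt (fun t : ℝ => t^2) (2*t) t := by
          simpa using hasDerivAt_pow 2 t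
        have := (hsq.const_mul (L/2)).mul_const (‖w‖^2)
        convert this using 1
        · rfl
        · rfl
        · ring
      exact (ha.add hb).sub h1
    have key := aux_deriv_le _ _ hg ?_
    · simp only [zero_smul, add_zero, one_smul, one_pow, mul_zero, zero_pow, mul_one,
        one_mul, zero_mul, sub_zero, zero_add, zero_sub, neg_le_sub_iff_le_add] at key
      norm_num at key
      linarith only [key]
    · intro t ht
      have h2 := (abs_le.mp (hF1 (v + t • w) v w)).2
      have he : v + t • w - v = t • w := by abel
      rw [he] at h2
      have hns : ‖t • w‖ = t * ‖w‖ := by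
        rw [norm_smul, Real.norm_eq_abs, abs_of_pos ht.1]
      rw [hns] at h2
      linarith only [h2]
  -- `ustar` is the global minimizer of `H`
  have hmin : ∀ z : X, H ustar ≤ H z := by
    intro z
    have h1 := hHlow ustar (z - ustar)
    rw [hustar, add_sub_cancel] at h1
    have hnn : 0 ≤ ν/2 * ‖z - ustar‖^2 := by positivity
    linarith only [h1, hnn]
  -- `ustarZ` is the minimizer of `H` over `Z`
  have hminZ : ∀ z ∈ Z, H ustarZ ≤ H z := by
    intro z hz
    have h1 := hHlow ustarZ (z - ustarZ)
    rw [hustarZ _ (Submodule.sub_mem Z hz hustarZ_mem), add_sub_cancel] at h1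
    have hnn : 0 ≤ ν/2 * ‖z - ustarZ‖^2 := by positivity
    linarith only [h1, hnn]
  have hupZ : ∀ z ∈ Z, H z - H ustarZ ≤ L/2 * ‖z - ustarZ‖^2 := by
    intro z hz
    have h1 := hHup ustarZ (z - ustarZ)
    rw [hustarZ _ (Submodule.sub_mem Z hz hustarZ_mem), add_sub_cancel] at h1
    linarith only [h1]
  -- ## the energy `E` and increments `δ`
  set E : ℕ → ℝ := fun n => H (u n) - H ustarZ with hE_def
  clear_value E
  set δ : ℕ → ℝ := fun n => ‖u (n+1) - u n‖ with hδ_def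
  clear_value δ
  have hEnn : ∀ n, 0 ≤ E n := fun n => by
    simp only [hE_def]; linarith only [hminZ (u n) (humem n)]
  have hδnn : ∀ n, 0 ≤ δ n := fun n => by
    simp only [hδ_def]; exact norm_nonneg _
  -- representation of `F (u n)` via the linearized equation
  have habs : ∀ uu v w : X, |a uu v w| ≤ β * ‖v‖ * ‖w‖ := by
    intro uu v w
    rw [abs_le]
    refine ⟨?_, hbdd uu v w⟩
    have h1 := hbdd uu (-v) w
    rw [norm_neg] at h1
    simp only [map_neg, LinearMap.neg_apply] at h1
    linarith only [h1]
  have hFrep : ∀ n : ℕ, ∀ w ∈ Z, (F (u n)) w = a (u n) (u n - u (n+1)) w := by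
    intro n w hw
    have h1 := hiter n w hw
    rw [map_sub]
    simp only [LinearMap.sub_apply]
    linarith only [h1]
  -- distance to `ustarZ` controlled by the increments
  have hdist : ∀ n : ℕ, ‖u n - ustarZ‖ ≤ β/ν * δ n := by
    intro n
    have he : u n - ustarZ ∈ Z := Submodule.sub_mem Z (humem n) hustarZ_mem
    have h2 := hF2 (u n) ustarZ
    rw [hustarZ _ he, hFrep n _ he] at h2
    have h3 := (abs_le.mp (habs (u n) (u n - u (n+1)) (u n - ustarZ))).2
    have h4 : ‖u n - u (n+1)‖ = δ n := by
      simp only [hδ_def]; exact norm_sub_rev _ _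
    rw [h4] at h3
    rcases eq_or_lt_of_le (norm_nonneg (u n - ustarZ)) with h0 | h0
    · rw [← h0]
      exact mul_nonneg (div_nonneg hβ.le hν.le) (hδnn n)
    · have h6 : ν * ‖u n - ustarZ‖ * ‖u n - ustarZ‖ ≤ β * δ n * ‖u n - ustarZ‖ := by
        linarith only [h2, h3]
      have h5 := le_of_mul_le_mul_right h6 h0
      rw [div_mul_eq_mul_div, le_div_iff₀ hν]
      linarith only [h5]
  have hdist2 : ∀ n : ℕ, ‖u (n+1) - ustarZ‖ ≤ C₃ * δ n := by
    intro n
    have ht : ‖u (n+1) - ustarZ‖ ≤ δ n + ‖u n - ustarZ‖ := by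
      have := dist_triangle (u (n+1)) (u n) ustarZ
      simpa [hδ_def, dist_eq_norm] using this
    have h1 := hdist n
    rw [hC₃]
    calc ‖u (n+1) - ustarZ‖ ≤ δ n + β/ν * δ n := by linarith only [ht, h1]
      _ = (1 + β/ν) * δ n := by ring
  -- (F4) restated
  have hF4' : ∀ n : ℕ, CH * δ n ^ 2 ≤ E n - E (n+1) := by
    intro n
    have h1 := hF4 (n+1) (Nat.succ_le_succ (Nat.zero_le n))
    simp only [Nat.add_sub_cancel] at h1
    simp only [hE_def, hδ_def]
    linarith only [h1]
  -- one-step a posteriori bound on the energy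
  have hEC : ∀ n : ℕ, E (n+1) ≤ C₄ * (CH * δ n ^ 2) := by
    intro n
    have h1 := hupZ (u (n+1)) (humem (n+1))
    have h2 := hdist2 n
    have h3 : ‖u (n+1) - ustarZ‖^2 ≤ (C₃ * δ n)^2 :=
      pow_le_pow_left₀ (norm_nonneg _) h2 2
    have h3' : L/2 * ‖u (n+1) - ustarZ‖^2 ≤ L/2 * (C₃ * δ n)^2 :=
      mul_le_mul_of_nonneg_left h3 (by positivity)
    have h4 : C₄ * (CH * δ n ^ 2) = L/2 * (C₃ * δ n)^2 := by
      rw [hC₄]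
      field_simp
    simp only [hE_def]
    rw [h4]
    linarith only [h1, h3']
  -- energy contraction
  have hEcontr : ∀ n : ℕ, E (n+1) ≤ q * E n := by
    intro n
    have h1 := hF4' n
    have h2 := hEC n
    have h3 : C₄ * (CH * δ n ^ 2) ≤ C₄ * (E n - E (n+1)) :=
      mul_le_mul_of_nonneg_left h1 hC₄pos.le
    rw [hq_def, div_mul_eq_mul_div, le_div_iff₀ h1C₄]
    linarith only [h2, h3]
  have hEq : ∀ n : ℕ, E n ≤ q ^ n * E 0 := by
    intro n
    induction n with
    | zero => simp
    | succ m ih =>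
      calc E (m+1) ≤ q * E m := hEcontr m
        _ ≤ q * (q ^ m * E 0) := mul_le_mul_of_nonneg_left ih hqpos.le
        _ = q ^ (m+1) * E 0 := by ring
  -- bound on the initial energy
  set A : ℝ := s * C₆ / C₃ * ηY uprev with hA_def
  clear_value A
  have hApos : 0 < A := by
    rw [hA_def]
    exact mul_pos (div_pos (mul_pos hspos hC₆pos) hC₃pos) hηYpos
  have hE0 : E 0 ≤ CH * A ^ 2 := by
    have h1 : E 0 ≤ H (u 0) - H ustar := by
      simp only [hE_def]
      linarith only [hmin ustarZ]
    have h2 : H (u 0) - H ustar ≤ L/2 * ‖u 0 - ustar‖^2 := by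
      have h2' := hHup ustar (u 0 - ustar)
      rw [hustar, add_sub_cancel] at h2'
      linarith only [h2']
    have h3 : ‖u 0 - ustar‖ ≤ C₆ * ηY uprev := by
      rw [hu0, norm_sub_rev]; exact huprev
    have h3' : ‖u 0 - ustar‖^2 ≤ (C₆ * ηY uprev)^2 :=
      pow_le_pow_left₀ (norm_nonneg _) h3 2
    have h4 : L/2 * ‖u 0 - ustar‖^2 ≤ L/2 * (C₆ * ηY uprev)^2 :=
      mul_le_mul_of_nonneg_left h3' (by positivity)
    have hCHs : CH * s ^ 2 = L * C₃ ^ 2 / 2 := by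
      rw [hs2, hC₄]; field_simp
    have h5 : CH * A ^ 2 = L/2 * (C₆ * ηY uprev)^2 := by
      rw [hA_def]
      field_simp
      linear_combination 2 * hCHs
    rw [h5]
    linarith only [h1, h2, h4]
  -- geometric decay of the increments
  have hδbound : ∀ n : ℕ, δ n ≤ θ ^ n * A := by
    intro n
    have h1 : CH * δ n ^ 2 ≤ q ^ n * E 0 := by
      linarith only [hF4' n, hEnn (n+1), hEq n]
    have h2 : q ^ n * E 0 ≤ q ^ n * (CH * A ^ 2) :=
      mul_le_mul_of_nonneg_left hE0 (pow_nonneg hqpos.le n)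
    have h3 : δ n ^ 2 ≤ (θ ^ n * A) ^ 2 := by
      have h4 : (θ ^ n * A)^2 = q ^ n * A ^ 2 := by
        rw [mul_pow, ← pow_mul, pow_mul', hθ2]
      rw [h4]
      have h5 : CH * δ n ^ 2 ≤ CH * (q ^ n * A ^ 2) := by
        linarith only [h1, h2]
      exact le_of_mul_le_mul_left h5 hCH
    calc δ n = Real.sqrt (δ n ^ 2) := (Real.sqrt_sq (hδnn n)).symm
      _ ≤ Real.sqrt ((θ ^ n * A)^2) := Real.sqrt_le_sqrt h3
      _ = θ ^ n * A := Real.sqrt_sq (by positivity)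
  -- ## the main estimate
  set Mx : ℝ := max 1 (ηY uprev / ηZ (u k)) with hMx_def
  clear_value Mx
  have hMx1 : 1 ≤ Mx := by rw [hMx_def]; exact le_max_left _ _
  have hMxY : ηY uprev ≤ Mx * ηZ (u k) := by
    have h1 : ηY uprev / ηZ (u k) ≤ Mx := by rw [hMx_def]; exact le_max_right _ _
    calc ηY uprev = ηY uprev / ηZ (u k) * ηZ (u k) :=
          (div_mul_cancel₀ _ (ne_of_gt hηZpos)).symm
      _ ≤ Mx * ηZ (u k) := mul_le_mul_of_nonneg_right h1 hηZpos.le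
  set R : ℝ := C * lam⁻¹ + C' with hR_def
  clear_value R
  have hRpos : 0 < R := by
    rw [hR_def]
    linarith only [mul_pos hCpos (inv_pos.mpr hlam), hC'pos]
  set Q : ℝ := 1 + C₄⁻¹ with hQ_def
  clear_value Q
  have hQpos : 0 < Q := by rw [hQ_def]; positivity
  have hQθ2 : Q * θ ^ 2 = 1 := by
    rw [hθ2, hQq]
    exact inv_mul_cancel₀ (ne_of_gt hqpos)
  have hQs : Q * s^2 = 1 + s^2 := by
    rw [hQ_def, hs2]
    field_simp
    ring
  have hC₄Q : C₄ ≤ C * lam⁻¹ := by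
    have hlC₃ : lam * C₃ ≤ C₆ := by
      rw [hC₆]
      linarith only [hC₂term]
    have h0 : s^2 * (lam * C₃) ≤ s^2 * C₆ :=
      mul_le_mul_of_nonneg_left hlC₃ (sq_nonneg s)
    rw [hCeq, ← hs2]
    have h9 : s^2 * C₆ / C₃ * lam⁻¹ = s^2 * C₆ / (C₃ * lam) := by
      field_simp
    rw [h9, le_div_iff₀ (mul_pos hC₃pos hlam)]
    calc s^2 * (C₃ * lam) = s^2 * (lam * C₃) := by ring
      _ ≤ s^2 * C₆ := h0
  have hmain : 1 ≤ R * Q * Mx * θ ^ (k-1) := by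
    rcases Nat.lt_or_ge k 2 with hk2 | hk2
    · -- k = 1
      have hk1 : k - 1 = 0 := by omega
      rw [hk1, pow_zero, mul_one]
      have h1 : C₄ * Q = C₄ + 1 := by
        rw [hQ_def]
        field_simp
      have hRC₄ : C₄ ≤ R := by
        rw [hR_def]; linarith only [hC₄Q, hC'pos]
      have h2 : C₄ * Q ≤ R * Q := mul_le_mul_of_nonneg_right hRC₄ hQpos.le
      have h3 : 1 ≤ R * Q := by linarith only [h1, h2, hC₄pos]
      have h4 : R * Q * 1 ≤ R * Q * Mx :=
        mul_le_mul_of_nonneg_left hMx1 (by positivity)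
      linarith only [h3, h4]
    · -- k ≥ 2
      obtain ⟨m, rfl⟩ : ∃ m, k = m + 2 := ⟨k - 2, by omega⟩
      have hfail := hkmin (m+1) (Nat.succ_le_succ (Nat.zero_le m)) (by omega)
      simp only [Nat.add_sub_cancel] at hfail
      push_neg at hfail
      have hfail' : lam * ηZ (u (m+1)) < δ m := by
        simp only [hδ_def]; exact hfail
      have hA1 := (abs_le.mp (hA1Z (u (m+2)) (humem (m+2)) (u (m+1)) (humem (m+1)))).2
      have hA1' : ηZ (u (m+2)) ≤ ηZ (u (m+1)) + C₁ * δ (m+1) := by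
        simp only [hδ_def]
        linarith only [hA1]
      have hηm1 : ηZ (u (m+1)) ≤ lam⁻¹ * δ m := by
        rw [← div_eq_inv_mul, le_div_iff₀ hlam]
        linarith only [hfail']
      have hstep : ηZ (u (m+2)) ≤ lam⁻¹ * δ m + C₁ * δ (m+1) := by
        linarith only [hA1', hηm1]
      -- coefficient inequalities
      have hcoef1 : s * C₆ / C₃ ≤ C * Q * θ := by
        rw [hCeq]
        have h1 : s^2 * C₆ / C₃ * Q * θ = (s * C₆ / C₃) * (s * (Q * θ)) := by ring
        rw [h1]
        have h2 : 1 ≤ s * (Q * θ) := by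
          have h3 : s * (Q * θ) * θ = s * (Q * θ^2) := by ring
          have h4 : 1 * θ ≤ s * (Q * θ) * θ := by
            rw [h3, hQθ2, mul_one, one_mul]
            exact hθs
          exact le_of_mul_le_mul_right h4 hθpos
        exact le_mul_of_one_le_right (by positivity) h2
      have hcoef2 : C₁ * (s * C₆ / C₃) ≤ C' * Q := by
        have hC'Q : C' * Q = C₁ * (s * C₆ / C₃) * (s^2 * Q / (1 - θ)) := by
          rw [hC'eq, hCeq]
          field_simp
        have hfrac : 1 ≤ s^2 * Q / (1 - θ) := by
          rw [le_div_iff₀ h1θ]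
          have h5 : s^2 * Q = 1 + s^2 := by rw [mul_comm]; exact hQs
          rw [h5]
          linarith only [sq_nonneg s, hθpos]
        rw [hC'Q]
        exact le_mul_of_one_le_right (by positivity) hfrac
      -- assemble
      have hδm := hδbound m
      have hδm1 := hδbound (m+1)
      have hlaminv : (0:ℝ) < lam⁻¹ := inv_pos.mpr hlam
      have e1 : lam⁻¹ * δ m ≤ lam⁻¹ * (θ ^ m * A) :=
        mul_le_mul_of_nonneg_left hδm hlaminv.le
      have e2 : C₁ * δ (m+1) ≤ C₁ * (θ ^ (m+1) * A) :=
        mul_le_mul_of_nonneg_left hδm1 hC₁pos.le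
      have e3 : lam⁻¹ * (θ ^ m * A) ≤ C * lam⁻¹ * (Q * θ ^ (m+1) * ηY uprev) := by
        have t1 : θ ^ m * (s * C₆ / C₃) ≤ θ ^ m * (C * Q * θ) :=
          mul_le_mul_of_nonneg_left hcoef1 (pow_nonneg hθpos.le m)
        calc lam⁻¹ * (θ ^ m * A) = lam⁻¹ * ηY uprev * (θ ^ m * (s * C₆ / C₃)) := by
              rw [hA_def]; ring
          _ ≤ lam⁻¹ * ηY uprev * (θ ^ m * (C * Q * θ)) :=
              mul_le_mul_of_nonneg_left t1 (mul_nonneg hlaminv.le hηYpos.le)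
          _ = C * lam⁻¹ * (Q * θ ^ (m+1) * ηY uprev) := by ring
      have e4 : C₁ * (θ ^ (m+1) * A) ≤ C' * (Q * θ ^ (m+1) * ηY uprev) := by
        calc C₁ * (θ ^ (m+1) * A) = θ ^ (m+1) * ηY uprev * (C₁ * (s * C₆ / C₃)) := by
              rw [hA_def]; ring
          _ ≤ θ ^ (m+1) * ηY uprev * (C' * Q) :=
              mul_le_mul_of_nonneg_left hcoef2
                (mul_nonneg (pow_nonneg hθpos.le _) hηYpos.le)
          _ = C' * (Q * θ ^ (m+1) * ηY uprev) := by ring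
      have hη2 : ηZ (u (m+2)) ≤ R * Q * θ ^ (m+1) * ηY uprev := by
        calc ηZ (u (m+2)) ≤ lam⁻¹ * δ m + C₁ * δ (m+1) := hstep
          _ ≤ C * lam⁻¹ * (Q * θ ^ (m+1) * ηY uprev) + C' * (Q * θ ^ (m+1) * ηY uprev) := by
              linarith only [e1, e2, e3, e4]
          _ = R * Q * θ ^ (m+1) * ηY uprev := by rw [hR_def]; ring
      have hsub : (m + 2) - 1 = m + 1 := rfl
      rw [hsub]
      have hRQθ : (0:ℝ) ≤ R * Q * θ ^ (m+1) := by positivity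
      have hη3 : ηZ (u (m+2)) ≤ R * Q * θ ^ (m+1) * (Mx * ηZ (u (m+2))) := by
        calc ηZ (u (m+2)) ≤ R * Q * θ ^ (m+1) * ηY uprev := hη2
          _ ≤ R * Q * θ ^ (m+1) * (Mx * ηZ (u (m+2))) :=
              mul_le_mul_of_nonneg_left hMxY hRQθ
      have h8 : 1 * ηZ (u (m+2)) ≤ R * Q * Mx * θ ^ (m+1) * ηZ (u (m+2)) := by
        calc 1 * ηZ (u (m+2)) = ηZ (u (m+2)) := one_mul _
          _ ≤ R * Q * θ ^ (m+1) * (Mx * ηZ (u (m+2))) := hη3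
          _ = R * Q * Mx * θ ^ (m+1) * ηZ (u (m+2)) := by ring
      exact le_of_mul_le_mul_right h8 hηZpos
  -- ## from the main estimate to the logarithmic bound
  have hQ1 : 1 < Q := by
    rw [hQ_def]
    linarith only [inv_pos.mpr hC₄pos]
  have hlogQ : 0 < Real.log Q := Real.log_pos hQ1
  set Xv : ℝ := R * Q * Mx with hXv_def
  clear_value Xv
  have hXvpos : 0 < Xv := by
    rw [hXv_def]
    exact mul_pos (mul_pos hRpos hQpos) (lt_of_lt_of_le one_pos hMx1)
  have hpk : (0:ℝ) < θ ^ (k-1) := pow_pos hθpos _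
  have h2 : (θ⁻¹) ^ (k-1) ≤ Xv := by
    rw [inv_pow, ← one_div, div_le_iff₀ hpk]
    exact hmain
  have hθinv : θ⁻¹ = Real.sqrt Q := by
    rw [← hθQ, inv_inv]
  have h3 : Real.log ((θ⁻¹) ^ (k-1)) ≤ Real.log Xv := by
    rw [Real.log_le_log_iff (pow_pos (inv_pos.mpr hθpos) _) hXvpos]
    exact h2
  rw [Real.log_pow, hθinv, Real.log_sqrt hQpos.le] at h3
  have hcast : ((k - 1 : ℕ) : ℝ) = (k : ℝ) - 1 := by
    push_cast [hk]
    ring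
  rw [hcast] at h3
  have hgoal : ((k:ℝ) - 1) ≤ 2 / Real.log Q * Real.log Xv := by
    rw [div_mul_eq_mul_div, le_div_iff₀ hlogQ]
    linarith only [h3]
  linarith only [hgoal]
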